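/- Let A ∈ ℝ^{m×n} with rank r, let A_r denote a best rank-r approximation of a matrix B obtained by truncated SVD with A ∈ {rank-r SVD truncations of B}, and suppose σ_{r+1}(B) ≤ σ, where σ_{r+1}(B) is the (r+1)-th singular value. Then for all x ∈ ℝ^m and y ∈ ℝ^n: |xᵀBy − xᵀAy| ≤ σ_{r+1}(B) · ‖N(Aᵀ)ᵀ x‖₂ · ‖N(A)ᵀ y‖₂ ≤ σ_{r+1}(B) · ‖x‖₂ · ‖y‖₂, where N(M) is a matrix whose columns form an orthonormal basis of the null space of M. -/

import Mathlib

open Matrix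

/-- Bessel's inequality for a dot-product-orthonormal family in `Fin p → ℝ`. -/
private lemma dot_bessel {p : ℕ} {ι : Type*} [Fintype ι] [DecidableEq ι]
    (S : Finset ι) (z : ι → Fin p → ℝ)
    (hz : ∀ i ∈ S, ∀ j ∈ S, z i ⬝ᵥ z j = if i = j then 1 else 0) (w : Fin p → ℝ) :
    ∑ i ∈ S, (z i ⬝ᵥ w) ^ 2 ≤ ∑ j, w j ^ 2 := by
  let v : S → EuclideanSpace ℝ (Fin p) := fun i => WithLp.toLp 2 (z i)
  let W : EuclideanSpace ℝ (Fin p) := WithLp.toLp 2 w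
  have hv : Orthonormal ℝ v := by
    rw [orthonormal_iff_ite]
    intro i j
    have := hz i i.2 j j.2
    simp only [v, PiLp.inner_apply, RCLike.inner_apply, conj_trivial]
    rw [show (∑ a, z j.1 a * z i.1 a) = z i.1 ⬝ᵥ z j.1 from
      Finset.sum_congr rfl fun a _ => mul_comm _ _, this]
    by_cases h : (i : ι) = j
    · simp [Subtype.ext h, h]
    · rw [if_neg h, if_neg (fun hh => h (congrArg Subtype.val hh))]
  have hb := hv.sum_inner_products_le (s := Finset.univ) W
  have hlhs : ∑ i : S, ‖(inner ℝ (v i) W : ℝ)‖ ^ 2 = ∑ i ∈ S, (z i ⬝ᵥ w) ^ 2 := by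
    rw [← Finset.sum_coe_sort S]
    refine Finset.sum_congr rfl fun i _ => ?_
    simp [v, W, PiLp.inner_apply, RCLike.inner_apply, sq_abs, dotProduct, mul_comm]
  have hrhs : ‖W‖ ^ 2 = ∑ j, w j ^ 2 := by
    rw [← real_inner_self_eq_norm_sq]
    simp only [W, PiLp.inner_apply, RCLike.inner_apply, conj_trivial, PiLp.toLp_apply, sq]
  rw [hlhs, hrhs] at hb
  exact hb

/-- Error bound for a rank-`r` truncated-SVD approximation `A` of `B`:
`|xᵀBy − xᵀAy| ≤ σ_{r+1}(B)·‖N(Aᵀ)ᵀx‖₂·‖N(A)ᵀy‖₂ ≤ σ_{r+1}(B)·‖x‖₂·‖y‖₂`,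
where the SVD data of `B` is given explicitly (`B = UΣVᵀ` with orthogonal `U`,
`V` and nonincreasing nonnegative singular values `s`), `A` keeps the first
`r` singular terms, and `NA`, `NAt` are matrices whose columns form
orthonormal bases of the null spaces of `A` and `Aᵀ` respectively. -/
theorem svd_truncation_error_bound (m n r : ℕ) (hr : r ≤ min m n)
    (B A : Matrix (Fin m) (Fin n) ℝ) (hrank : A.rank = r)
    (Um : Matrix (Fin m) (Fin m) ℝ) (Vm : Matrix (Fin n) (Fin n) ℝ)
    (s : Fin (min m n) → ℝ)
    (hU : Um.transpose * Um = 1) (hV : Vm.transpose * Vm = 1)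
    (hmono : Antitone s) (hnonneg : ∀ i, 0 ≤ s i)
    (hB : ∀ a b, B a b = ∑ i : Fin (min m n),
      s i * Um a (Fin.castLE (Nat.min_le_left m n) i) *
        Vm b (Fin.castLE (Nat.min_le_right m n) i))
    (hA : ∀ a b, A a b = ∑ i : Fin (min m n), if (i : ℕ) < r then
      s i * Um a (Fin.castLE (Nat.min_le_left m n) i) *
        Vm b (Fin.castLE (Nat.min_le_right m n) i) else 0)
    -- the (r+1)-th singular value of B
    (σnext : ℝ) (hσ : σnext = if h : r < min m n then s ⟨r, h⟩ else 0)
    -- orthonormal bases of the null spaces of A and Aᵀ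
    (k k' : ℕ)
    (NA : Matrix (Fin n) (Fin k) ℝ) (NAt : Matrix (Fin m) (Fin k') ℝ)
    (hNA1 : NA.transpose * NA = 1)
    (hNA2 : ∀ y : Fin n → ℝ, A.mulVec y = 0 ↔ ∃ z, NA.mulVec z = y)
    (hNAt1 : NAt.transpose * NAt = 1)
    (hNAt2 : ∀ x : Fin m → ℝ, A.transpose.mulVec x = 0 ↔ ∃ z, NAt.mulVec z = x)
    (x : Fin m → ℝ) (y : Fin n → ℝ) :
    |x ⬝ᵥ B.mulVec y - x ⬝ᵥ A.mulVec y|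
        ≤ σnext * Real.sqrt (∑ i, (NAt.transpose.mulVec x i) ^ 2)
            * Real.sqrt (∑ i, (NA.transpose.mulVec y i) ^ 2) ∧
      σnext * Real.sqrt (∑ i, (NAt.transpose.mulVec x i) ^ 2)
          * Real.sqrt (∑ i, (NA.transpose.mulVec y i) ^ 2)
        ≤ σnext * Real.sqrt (∑ i, (x i) ^ 2) * Real.sqrt (∑ i, (y i) ^ 2) := by
  classical
  set ci : Fin (min m n) → Fin m := Fin.castLE (Nat.min_le_left m n) with hci
  set cj : Fin (min m n) → Fin n := Fin.castLE (Nat.min_le_right m n) with hcj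
  have hciinj : Function.Injective ci := Fin.castLE_injective _
  have hcjinj : Function.Injective cj := Fin.castLE_injective _
  set u : Fin (min m n) → ℝ := fun i => (fun a => Um a (ci i)) ⬝ᵥ x with hu
  set v : Fin (min m n) → ℝ := fun i => (fun b => Vm b (cj i)) ⬝ᵥ y with hv'
  have hUe : ∀ p q, (fun a => Um a p) ⬝ᵥ (fun a => Um a q) = if p = q then 1 else 0 := by
    intro p q
    have := congrFun (congrFun hU p) q
    simpa [Matrix.mul_apply, Matrix.one_apply, dotProduct] using this
  have hVe : ∀ p q, (fun b => Vm b p) ⬝ᵥ (fun b => Vm b q) = if p = q then 1 else 0 := by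
    intro p q
    have := congrFun (congrFun hV p) q
    simpa [Matrix.mul_apply, Matrix.one_apply, dotProduct] using this
  -- expand the bilinear forms
  have hBx : x ⬝ᵥ B.mulVec y = ∑ i, s i * u i * v i := by
    simp only [hu, hv', dotProduct, mulVec, hB, Finset.sum_mul, Finset.mul_sum]
    refine (Finset.sum_congr rfl fun a _ => Finset.sum_comm).trans ?_
    refine Finset.sum_comm.trans ?_
    refine (Finset.sum_congr rfl fun i _ => Finset.sum_comm).trans ?_
    exact Finset.sum_congr rfl fun i _ => Finset.sum_congr rfl fun b _ =>
      Finset.sum_congr rfl fun a _ => by ring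
  have hAx : x ⬝ᵥ A.mulVec y = ∑ i : Fin (min m n), if (i : ℕ) < r then s i * u i * v i else 0 := by
    simp only [hu, hv', dotProduct, mulVec, hA, Finset.sum_mul, Finset.mul_sum]
    refine (Finset.sum_congr rfl fun a _ => Finset.sum_comm).trans ?_
    refine Finset.sum_comm.trans ?_
    refine (Finset.sum_congr rfl fun i _ => Finset.sum_comm).trans ?_
    refine Finset.sum_congr rfl fun i _ => ?_
    by_cases h : (i : ℕ) < r
    · simp only [if_pos h]
      exact Finset.sum_congr rfl fun b _ => Finset.sum_congr rfl fun a _ => by ring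
    · simp [h]
  set S : Finset (Fin (min m n)) := Finset.univ.filter (fun i => ¬ (i : ℕ) < r) with hS
  have hdiff : x ⬝ᵥ B.mulVec y - x ⬝ᵥ A.mulVec y = ∑ i ∈ S, s i * u i * v i := by
    rw [hBx, hAx, ← Finset.sum_sub_distrib, hS]
    rw [Finset.sum_filter]
    refine Finset.sum_congr rfl fun i _ => ?_
    by_cases h : (i : ℕ) < r <;> simp [h]
  have hσnn : 0 ≤ σnext := by
    rw [hσ]; split
    · exact hnonneg _
    · exact le_refl 0
  have hsle : ∀ i ∈ S, s i ≤ σnext := by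
    intro i hi
    rw [hS, Finset.mem_filter] at hi
    have hir : r ≤ (i : ℕ) := not_lt.mp hi.2
    have hrlt : r < min m n := lt_of_le_of_lt hir i.isLt
    rw [hσ, dif_pos hrlt]
    exact hmono hir
  -- preservation of dot products by matrices with orthonormal columns
  have mulVec_dot : ∀ {p q : ℕ} (N : Matrix (Fin p) (Fin q) ℝ), N.transpose * N = 1 →
      ∀ a b : Fin q → ℝ, N.mulVec a ⬝ᵥ N.mulVec b = a ⬝ᵥ b := by
    intro p q N hN a b
    rw [dotProduct_mulVec, ← mulVec_transpose, mulVec_mulVec, hN, one_mulVec]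
  have dot_tmul : ∀ {p q : ℕ} (N : Matrix (Fin p) (Fin q) ℝ) (a : Fin q → ℝ) (w : Fin p → ℝ),
      a ⬝ᵥ N.transpose.mulVec w = N.mulVec a ⬝ᵥ w := by
    intro p q N a w
    rw [dotProduct_mulVec, vecMul_transpose]
  -- columns of `Um` with index `≥ r` lie in the null space of `Aᵀ`
  have hAU : ∀ i ∈ S, A.transpose.mulVec (fun a => Um a (ci i)) = 0 := by
    intro i hi
    rw [hS, Finset.mem_filter] at hi
    funext b
    simp only [mulVec, dotProduct, transpose_apply, Pi.zero_apply]
    simp only [hA, Finset.sum_mul]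
    rw [Finset.sum_comm]
    apply Finset.sum_eq_zero
    intro j _
    by_cases hj : (j : ℕ) < r
    · have hne : ci j ≠ ci i := by
        intro h
        exact hi.2 (hciinj h ▸ hj)
      have hUij := hUe (ci j) (ci i)
      rw [if_neg hne] at hUij
      calc ∑ a, (if (j : ℕ) < r then
              s j * Um a (ci j) * Vm b (cj j) else 0) * Um a (ci i)
          = s j * Vm b (cj j) * ((fun a => Um a (ci j)) ⬝ᵥ fun a => Um a (ci i)) := by
            simp only [if_pos hj, dotProduct, Finset.mul_sum]
            exact Finset.sum_congr rfl fun a _ => by ring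
        _ = 0 := by rw [hUij, mul_zero]
    · simp [hj]
  -- columns of `Vm` with index `≥ r` lie in the null space of `A`
  have hAV : ∀ i ∈ S, A.mulVec (fun b => Vm b (cj i)) = 0 := by
    intro i hi
    rw [hS, Finset.mem_filter] at hi
    funext a
    simp only [mulVec, dotProduct, Pi.zero_apply]
    simp only [hA, Finset.sum_mul]
    rw [Finset.sum_comm]
    apply Finset.sum_eq_zero
    intro j _
    by_cases hj : (j : ℕ) < r
    · have hne : cj j ≠ cj i := by
        intro h
        exact hi.2 (hcjinj h ▸ hj)
      have hVij := hVe (cj j) (cj i)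
      rw [if_neg hne] at hVij
      calc ∑ b, (if (j : ℕ) < r then
              s j * Um a (ci j) * Vm b (cj j) else 0) * Vm b (cj i)
          = s j * Um a (ci j) * ((fun b => Vm b (cj j)) ⬝ᵥ fun b => Vm b (cj i)) := by
            simp only [if_pos hj, dotProduct, Finset.mul_sum]
            exact Finset.sum_congr rfl fun b _ => by ring
        _ = 0 := by rw [hVij, mul_zero]
    · simp [hj]
  -- choose preimages under NAt / NA
  have hexu : ∀ i ∈ S, ∃ zz, NAt.mulVec zz = (fun a => Um a (ci i)) :=
    fun i hi => (hNAt2 _).mp (hAU i hi)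
  have hexv : ∀ i ∈ S, ∃ zz, NA.mulVec zz = (fun b => Vm b (cj i)) :=
    fun i hi => (hNA2 _).mp (hAV i hi)
  choose! zu hzu using hexu
  choose! zv hzv using hexv
  have hzuo : ∀ i ∈ S, ∀ j ∈ S, zu i ⬝ᵥ zu j = if i = j then 1 else 0 := by
    intro i hi j hj
    have h1 := mulVec_dot NAt hNAt1 (zu i) (zu j)
    rw [hzu i hi, hzu j hj] at h1
    rw [← h1, hUe]
    by_cases h : i = j
    · simp [h]
    · rw [if_neg (fun hh => h (hciinj hh)), if_neg h]
  have hzvo : ∀ i ∈ S, ∀ j ∈ S, zv i ⬝ᵥ zv j = if i = j then 1 else 0 := by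
    intro i hi j hj
    have h1 := mulVec_dot NA hNA1 (zv i) (zv j)
    rw [hzv i hi, hzv j hj] at h1
    rw [← h1, hVe]
    by_cases h : i = j
    · simp [h]
    · rw [if_neg (fun hh => h (hcjinj hh)), if_neg h]
  have hbu : ∑ i ∈ S, u i ^ 2 ≤ ∑ j, (NAt.transpose.mulVec x j) ^ 2 := by
    refine le_trans (le_of_eq ?_) (dot_bessel S zu hzuo (NAt.transpose.mulVec x))
    refine Finset.sum_congr rfl fun i hi => ?_
    rw [dot_tmul NAt (zu i) x, hzu i hi]
  have hbv : ∑ i ∈ S, v i ^ 2 ≤ ∑ j, (NA.transpose.mulVec y j) ^ 2 := by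
    refine le_trans (le_of_eq ?_) (dot_bessel S zv hzvo (NA.transpose.mulVec y))
    refine Finset.sum_congr rfl fun i hi => ?_
    rw [dot_tmul NA (zv i) y, hzv i hi]
  have hsqnn : ∀ {c : ℕ} (f : Fin c → ℝ), (0:ℝ) ≤ ∑ i, f i ^ 2 :=
    fun f => Finset.sum_nonneg fun i _ => sq_nonneg _
  constructor
  · rw [hdiff]
    calc |∑ i ∈ S, s i * u i * v i|
        ≤ ∑ i ∈ S, |s i * u i * v i| := Finset.abs_sum_le_sum_abs _ _
      _ = ∑ i ∈ S, s i * (|u i| * |v i|) := by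
          refine Finset.sum_congr rfl fun i _ => ?_
          rw [abs_mul, abs_mul, abs_of_nonneg (hnonneg i), mul_assoc]
      _ ≤ ∑ i ∈ S, σnext * (|u i| * |v i|) := by
          refine Finset.sum_le_sum fun i hi => ?_
          exact mul_le_mul_of_nonneg_right (hsle i hi)
            (mul_nonneg (abs_nonneg _) (abs_nonneg _))
      _ = σnext * ∑ i ∈ S, |u i| * |v i| := by rw [Finset.mul_sum]
      _ ≤ σnext * (Real.sqrt (∑ i ∈ S, u i ^ 2) * Real.sqrt (∑ i ∈ S, v i ^ 2)) := by
          refine mul_le_mul_of_nonneg_left ?_ hσnn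
          have := Real.sum_mul_le_sqrt_mul_sqrt S (fun i => |u i|) (fun i => |v i|)
          simpa [sq_abs] using this
      _ ≤ σnext * Real.sqrt (∑ i, (NAt.transpose.mulVec x i) ^ 2)
            * Real.sqrt (∑ i, (NA.transpose.mulVec y i) ^ 2) := by
          rw [mul_assoc]
          refine mul_le_mul_of_nonneg_left ?_ hσnn
          exact mul_le_mul (Real.sqrt_le_sqrt hbu) (Real.sqrt_le_sqrt hbv)
            (Real.sqrt_nonneg _) (Real.sqrt_nonneg _)
  · have h1 : ∑ j, (NAt.transpose.mulVec x j) ^ 2 ≤ ∑ i, x i ^ 2 := by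
      have hz : ∀ i ∈ (Finset.univ : Finset (Fin k')), ∀ j ∈ (Finset.univ : Finset (Fin k')),
          (fun a => NAt a i) ⬝ᵥ (fun a => NAt a j) = if i = j then 1 else 0 := by
        intro i _ j _
        have := congrFun (congrFun hNAt1 i) j
        simpa [Matrix.mul_apply, Matrix.one_apply, dotProduct] using this
      have := dot_bessel Finset.univ (fun j => fun a => NAt a j) hz x
      refine le_trans (le_of_eq ?_) this
      refine Finset.sum_congr rfl fun j _ => ?_
      simp [mulVec, dotProduct, transpose_apply]
    have h2 : ∑ j, (NA.transpose.mulVec y j) ^ 2 ≤ ∑ i, y i ^ 2 := by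
      have hz : ∀ i ∈ (Finset.univ : Finset (Fin k)), ∀ j ∈ (Finset.univ : Finset (Fin k)),
          (fun a => NA a i) ⬝ᵥ (fun a => NA a j) = if i = j then 1 else 0 := by
        intro i _ j _
        have := congrFun (congrFun hNA1 i) j
        simpa [Matrix.mul_apply, Matrix.one_apply, dotProduct] using this
      have := dot_bessel Finset.univ (fun j => fun a => NA a j) hz y
      refine le_trans (le_of_eq ?_) this
      refine Finset.sum_congr rfl fun j _ => ?_
      simp [mulVec, dotProduct, transpose_apply]
    rw [mul_assoc, mul_assoc]
    refine mul_le_mul_of_nonneg_left ?_ hσnn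
    exact mul_le_mul (Real.sqrt_le_sqrt h1) (Real.sqrt_le_sqrt h2)
      (Real.sqrt_nonneg _) (Real.sqrt_nonneg _)
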